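/- For the n-bidder, 2-signal instance with v_i as in the context and the prior where the all-ones profile has probability ε and each profile with exactly one zero-coordinate has probability (1−ε)/n, any monotone feasible allocation has expected welfare at most 1/n + 1/c + ε, while the optimal expected welfare is at least 1; hence no truthful (monotone) mechanism achieves an approximation factor better than 1/(1/n + 1/c + ε). -/

import Mathlib

/-- Randomized `c` lower bound with `c`-single-crossing: with the valuations of
the 2-signal instance and the prior placing probability `ε` on the all-ones
profile and `(1-ε)/n` on each profile with exactly one zero coordinate,
any monotone feasible allocation has expected welfare at most
`1/n + 1/c + ε`, while the optimal expected welfare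
`(1-ε)·1 + ε·(1 + 1/c)` is at least `1`. -/
theorem randomized_c_lower_bound
    (n : ℕ) (hn : 2 ≤ n) (c ε : ℝ) (hc : 1 ≤ c) (hε : 0 < ε) (hε1 : ε < 1)
    (v : Fin n → (Fin n → Bool) → ℝ)
    (hv : ∀ i s, v i s =
      if s i = true then
        (if ∀ j, j ≠ i → s j = true then 1 + 1 / c else 1 / c)
      else
        (if ∀ j, j ≠ i → s j = true then 1 else 0))
    (x : (Fin n → Bool) → Fin n → ℝ)
    (hx0 : ∀ s i, 0 ≤ x s i)
    (hfeas : ∀ s, ∑ i, x s i ≤ 1)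
    (hmono : ∀ s i, x (Function.update s i false) i ≤ x (Function.update s i true) i) :
    (ε * ∑ j, x (fun _ => true) j * v j (fun _ => true) +
      ∑ i, (1 - ε) / n *
        ∑ j, x (Function.update (fun _ => true) i false) j *
              v j (Function.update (fun _ => true) i false)
      ≤ 1 / n + 1 / c + ε) ∧
    (1 : ℝ) ≤ (1 - ε) * 1 + ε * (1 + 1 / c) := by
  have hc0 : (0:ℝ) < c := lt_of_lt_of_le one_pos hc
  have hcinv : (0:ℝ) ≤ 1/c := by positivity
  have hcinv1 : 1/c ≤ 1 := by rw [div_le_one hc0]; exact hc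
  have hnR : (2:ℝ) ≤ (n:ℝ) := by exact_mod_cast hn
  have hn0 : (0:ℝ) < (n:ℝ) := by linarith
  constructor
  · set A : Fin n → Bool := fun _ => true with hA
    have vA : ∀ j : Fin n, v j A = 1 + 1/c := by
      intro j; rw [hv]; simp [hA]
    have vS : ∀ i j : Fin n, v j (Function.update A i false) =
        if j = i then 1 else 1/c := by
      intro i j
      rw [hv]
      by_cases h : j = i
      · subst h
        simp [Function.update_apply, hA]
      · have h1 : Function.update A i false j = true := by
          simp [Function.update_apply, h, hA]
        have h2 : ¬ (∀ k, k ≠ j → Function.update A i false k = true) := by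
          intro hk
          have := hk i (fun hij => h hij.symm)
          simp [Function.update_apply] at this
        simp [h1, h2, h]
    have sum1 : ∑ j, x A j * v j A ≤ 1 + 1/c := by
      have heq : ∑ j, x A j * v j A = (∑ j, x A j) * (1 + 1/c) := by
        rw [Finset.sum_mul]
        exact Finset.sum_congr rfl fun j _ => by rw [vA j]
      rw [heq]
      calc (∑ j, x A j) * (1 + 1/c) ≤ 1 * (1 + 1/c) := by
            apply mul_le_mul_of_nonneg_right (hfeas A); positivity
        _ = 1 + 1/c := one_mul _
    have sum2 : ∀ i, ∑ j, x (Function.update A i false) j * v j (Function.update A i false)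
        ≤ x (Function.update A i false) i * (1 - 1/c) + 1/c := by
      intro i
      have heq : ∀ j ∈ Finset.univ, x (Function.update A i false) j * v j (Function.update A i false)
          = x (Function.update A i false) j * (1/c)
            + (if j = i then x (Function.update A i false) i * (1 - 1/c) else 0) := by
        intro j _
        rw [vS i j]
        by_cases h : j = i
        · subst h; simp; ring
        · simp [h]
      rw [Finset.sum_congr rfl heq, Finset.sum_add_distrib,
        Finset.sum_ite_eq' Finset.univ i
          (fun _ => x (Function.update A i false) i * (1 - 1/c))]
      simp only [Finset.mem_univ, if_true]
      have h1 : ∑ j, x (Function.update A i false) j * (1/c) ≤ 1/c := by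
        rw [← Finset.sum_mul]
        calc (∑ j, x (Function.update A i false) j) * (1/c) ≤ 1 * (1/c) := by
              apply mul_le_mul_of_nonneg_right (hfeas _) hcinv
          _ = 1/c := one_mul _
      linarith
    have hAupd : ∀ i : Fin n, Function.update A i true = A := by
      intro i; funext k; simp [Function.update_apply, hA]
    have hmono' : ∀ i, x (Function.update A i false) i ≤ x A i := by
      intro i; have := hmono A i; rwa [hAupd i] at this
    have hsx : ∑ i, x (Function.update A i false) i ≤ 1 := by
      calc ∑ i, x (Function.update A i false) i ≤ ∑ i, x A i :=
            Finset.sum_le_sum fun i _ => hmono' i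
        _ ≤ 1 := hfeas A
    have hcoef : (0:ℝ) ≤ (1 - ε) / n := by
      apply div_nonneg (by linarith) hn0.le
    have hmain : ∑ i, (1 - ε) / n *
        ∑ j, x (Function.update A i false) j * v j (Function.update A i false)
        ≤ (1 - ε) / n * ((1 - 1/c) + (n:ℝ) * (1/c)) := by
      calc ∑ i, (1 - ε) / n *
            ∑ j, x (Function.update A i false) j * v j (Function.update A i false)
          ≤ ∑ i, (1 - ε) / n * (x (Function.update A i false) i * (1 - 1/c) + 1/c) :=
            Finset.sum_le_sum fun i _ => mul_le_mul_of_nonneg_left (sum2 i) hcoef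
        _ = (1 - ε) / n * ((∑ i, x (Function.update A i false) i) * (1 - 1/c) + (n:ℝ) * (1/c)) := by
            rw [← Finset.mul_sum, Finset.sum_add_distrib, ← Finset.sum_mul]
            simp [Finset.card_univ]
        _ ≤ (1 - ε) / n * ((1 - 1/c) + (n:ℝ) * (1/c)) := by
            apply mul_le_mul_of_nonneg_left _ hcoef
            have h1c : (0:ℝ) ≤ 1 - 1/c := by linarith
            nlinarith
    have hterm1 : ε * ∑ j, x A j * v j A ≤ ε * (1 + 1/c) :=
      mul_le_mul_of_nonneg_left sum1 hε.le
    have key : ε * (1 + 1/c) + (1 - ε) / n * ((1 - 1/c) + (n:ℝ) * (1/c))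
        ≤ 1/(n:ℝ) + 1/c + ε := by
      have hfield : (1 - ε) / n * ((1 - 1/c) + (n:ℝ) * (1/c))
          = (1 - ε) * (1 - 1/c) / n + (1 - ε) * (1/c) := by
        field_simp
      rw [hfield]
      have h1 : (1 - ε) * (1 - 1/c) / n ≤ 1 / n := by
        gcongr
        nlinarith
      nlinarith
    calc ε * ∑ j, x A j * v j A +
          ∑ i, (1 - ε) / n *
            ∑ j, x (Function.update A i false) j * v j (Function.update A i false)
        ≤ ε * (1 + 1/c) + (1 - ε) / n * ((1 - 1/c) + (n:ℝ) * (1/c)) := by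
          linarith [hterm1, hmain]
      _ ≤ 1/(n:ℝ) + 1/c + ε := key
  · nlinarith [mul_nonneg hε.le hcinv]
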